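/- Let A be an n×n real symmetric positive semidefinite matrix with A ≠ 0 and B an n×n real symmetric positive definite matrix, and let λ₁ = max_{x≠0} (xᵀAx)/(xᵀBx). A point x ∈ ℝⁿ is a global minimizer of f(x) = xᵀBx − (xᵀAx)^{1/2} if and only if Ax = λ₁·Bx and xᵀBx = λ₁/4; moreover the global minimum value of f is −λ₁/4. -/

import Mathlib

open Matrix

private lemma star_eq_self_real {n : ℕ} (x : Fin n → ℝ) : star x = x := by
  funext i; simp

/-- `x` is a global minimizer of `f(x) = xᵀBx − √(xᵀAx)` iff `Ax = λ₁ Bx` and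
`xᵀBx = λ₁/4`; moreover the global minimum value of `f` is `−λ₁/4`. -/
theorem stmt_2 {n : ℕ} (A B : Matrix (Fin n) (Fin n) ℝ)
    (hA : A.PosSemidef) (hA0 : A ≠ 0) (hB : B.PosDef) (lam1 : ℝ)
    (hlam : IsGreatest
      {r : ℝ | ∃ z : Fin n → ℝ, z ≠ 0 ∧ r = (z ⬝ᵥ A *ᵥ z) / (z ⬝ᵥ B *ᵥ z)} lam1) :
    (∀ x : Fin n → ℝ,
      ((∀ y : Fin n → ℝ,
          x ⬝ᵥ B *ᵥ x - Real.sqrt (x ⬝ᵥ A *ᵥ x) ≤ y ⬝ᵥ B *ᵥ y - Real.sqrt (y ⬝ᵥ A *ᵥ y)) ↔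
        (A *ᵥ x = lam1 • (B *ᵥ x) ∧ x ⬝ᵥ B *ᵥ x = lam1 / 4))) ∧
    IsLeast (Set.range fun x : Fin n → ℝ => x ⬝ᵥ B *ᵥ x - Real.sqrt (x ⬝ᵥ A *ᵥ x))
      (-(lam1 / 4)) := by
  have hAnn : ∀ z : Fin n → ℝ, 0 ≤ z ⬝ᵥ A *ᵥ z := by
    intro z; have := hA.dotProduct_mulVec_nonneg z; rwa [star_eq_self_real] at this
  have hBpos : ∀ z : Fin n → ℝ, z ≠ 0 → 0 < z ⬝ᵥ B *ᵥ z := by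
    intro z hz; have := hB.dotProduct_mulVec_pos hz; rwa [star_eq_self_real] at this
  -- A ≠ 0 gives a vector with positive quadratic form
  have hex : ∃ z : Fin n → ℝ, 0 < z ⬝ᵥ A *ᵥ z := by
    by_contra h
    push_neg at h
    apply hA0
    have hz : ∀ z : Fin n → ℝ, A *ᵥ z = 0 := by
      intro z
      have h0 : z ⬝ᵥ A *ᵥ z = 0 := le_antisymm (h z) (hAnn z)
      have := (hA.dotProduct_mulVec_zero_iff z)
      rw [star_eq_self_real] at this
      exact this.mp h0
    ext i j
    have := congrFun (hz (Pi.single j 1)) i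
    simpa [mulVec, dotProduct, Pi.single_apply] using this
  obtain ⟨w, hw⟩ := hex
  have hw0 : w ≠ 0 := by
    rintro rfl; simp at hw
  have hlam1 : 0 < lam1 := by
    have hmem : (w ⬝ᵥ A *ᵥ w) / (w ⬝ᵥ B *ᵥ w) ∈
        {r : ℝ | ∃ z : Fin n → ℝ, z ≠ 0 ∧ r = (z ⬝ᵥ A *ᵥ z) / (z ⬝ᵥ B *ᵥ z)} :=
      ⟨w, hw0, rfl⟩
    have := hlam.2 hmem
    exact lt_of_lt_of_le (div_pos hw (hBpos w hw0)) this
  -- upper bound: zᵀAz ≤ λ₁ zᵀBz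
  have hub : ∀ y : Fin n → ℝ, y ⬝ᵥ A *ᵥ y ≤ lam1 * (y ⬝ᵥ B *ᵥ y) := by
    intro y
    rcases eq_or_ne y 0 with rfl | hy
    · simp
    · have hb := hBpos y hy
      have := hlam.2 ⟨y, hy, rfl⟩
      rw [div_le_iff₀ hb] at this
      linarith
  -- λ₁B − A is PSD
  have hPSD : (lam1 • B - A).PosSemidef := by
    refine PosSemidef.of_dotProduct_mulVec_nonneg ?_ ?_
    · show (lam1 • B - A)ᴴ = _
      rw [conjTranspose_sub, conjTranspose_smul, hB.1.eq, hA.1.eq]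
      simp
    · intro z
      rw [star_eq_self_real, sub_mulVec, dotProduct_sub, smul_mulVec,
        dotProduct_smul, smul_eq_mul]
      linarith [hub z]
  -- global lower bound
  have hmin : ∀ y : Fin n → ℝ,
      -(lam1 / 4) ≤ y ⬝ᵥ B *ᵥ y - Real.sqrt (y ⬝ᵥ A *ᵥ y) := by
    intro y
    have hb : 0 ≤ y ⬝ᵥ B *ᵥ y := by
      rcases eq_or_ne y 0 with rfl | hy
      · simp
      · exact (hBpos y hy).le
    have h1 : Real.sqrt (y ⬝ᵥ A *ᵥ y) ≤ Real.sqrt (lam1 * (y ⬝ᵥ B *ᵥ y)) :=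
      Real.sqrt_le_sqrt (hub y)
    have h2 : Real.sqrt (lam1 * (y ⬝ᵥ B *ᵥ y)) =
        Real.sqrt lam1 * Real.sqrt (y ⬝ᵥ B *ᵥ y) := Real.sqrt_mul hlam1.le _
    nlinarith [Real.sq_sqrt hb, Real.sq_sqrt hlam1.le,
      sq_nonneg (Real.sqrt (y ⬝ᵥ B *ᵥ y) - Real.sqrt lam1 / 2)]
  -- the minimum is attained
  obtain ⟨z, hz0, hr⟩ := hlam.1
  have hb0 : 0 < z ⬝ᵥ B *ᵥ z := hBpos z hz0
  have ha0 : z ⬝ᵥ A *ᵥ z = lam1 * (z ⬝ᵥ B *ᵥ z) := by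
    field_simp at hr
    linarith [hr]
  set c : ℝ := Real.sqrt (lam1 / (4 * (z ⬝ᵥ B *ᵥ z))) with hc
  have hc2 : c ^ 2 = lam1 / (4 * (z ⬝ᵥ B *ᵥ z)) :=
    Real.sq_sqrt (by positivity)
  have hquad : ∀ M : Matrix (Fin n) (Fin n) ℝ,
      (c • z) ⬝ᵥ M *ᵥ (c • z) = c ^ 2 * (z ⬝ᵥ M *ᵥ z) := by
    intro M
    rw [mulVec_smul, dotProduct_smul, smul_dotProduct, smul_eq_mul, smul_eq_mul]
    ring
  have hBx0 : (c • z) ⬝ᵥ B *ᵥ (c • z) = lam1 / 4 := by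
    rw [hquad B, hc2]; field_simp
  have hAx0 : (c • z) ⬝ᵥ A *ᵥ (c • z) = lam1 ^ 2 / 4 := by
    rw [hquad A, hc2, ha0]
    field_simp
  have hsq : Real.sqrt (lam1 ^ 2 / 4) = lam1 / 2 := by
    rw [show lam1 ^ 2 / 4 = (lam1 / 2) ^ 2 by ring, Real.sqrt_sq (by linarith)]
  have hfx0 : (c • z) ⬝ᵥ B *ᵥ (c • z) - Real.sqrt ((c • z) ⬝ᵥ A *ᵥ (c • z)) =
      -(lam1 / 4) := by
    rw [hBx0, hAx0, hsq]; ring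
  constructor
  · intro x
    constructor
    · intro hx
      -- x is a global minimizer, hence f x = -(λ₁/4)
      have hfx : x ⬝ᵥ B *ᵥ x - Real.sqrt (x ⬝ᵥ A *ᵥ x) = -(lam1 / 4) := by
        have h1 := hx (c • z)
        rw [hfx0] at h1
        exact le_antisymm h1 (hmin x)
      set a := x ⬝ᵥ A *ᵥ x with ha
      set b := x ⬝ᵥ B *ᵥ x with hbdef
      have han : 0 ≤ a := hAnn x
      have hbn : 0 ≤ b := by
        rcases eq_or_ne x 0 with rfl | hx0
        · simp [hbdef]
        · exact (hBpos x hx0).le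
      have h1 : Real.sqrt a ≤ Real.sqrt (lam1 * b) := Real.sqrt_le_sqrt (hub x)
      have h2 : Real.sqrt (lam1 * b) = Real.sqrt lam1 * Real.sqrt b :=
        Real.sqrt_mul hlam1.le _
      -- from equality, both inequalities are tight
      have hkey : Real.sqrt a = Real.sqrt (lam1 * b) := by
        have h3 : b - Real.sqrt lam1 * Real.sqrt b ≥ -(lam1 / 4) := by
          nlinarith [Real.sq_sqrt hbn, Real.sq_sqrt hlam1.le,
            sq_nonneg (Real.sqrt b - Real.sqrt lam1 / 2)]
        have h4 : Real.sqrt (lam1 * b) ≤ Real.sqrt a := by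
          rw [h2]; linarith [hfx]
        linarith
      have hab : a = lam1 * b := by
        have := congrArg (· ^ 2) hkey
        simpa [Real.sq_sqrt han, Real.sq_sqrt (by positivity : (0:ℝ) ≤ lam1 * b)]
          using this
      have hbeq : b = lam1 / 4 := by
        have h5 : Real.sqrt a = Real.sqrt lam1 * Real.sqrt b := by rw [hkey, h2]
        have h6 : b - Real.sqrt lam1 * Real.sqrt b = -(lam1 / 4) := by
          rw [← h5]; linarith [hfx]
        have h7 : (Real.sqrt b - Real.sqrt lam1 / 2) ^ 2 = 0 := by
          nlinarith [Real.sq_sqrt hbn, Real.sq_sqrt hlam1.le]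
        have h8 : Real.sqrt b = Real.sqrt lam1 / 2 := by
          have := pow_eq_zero_iff (n := 2) (by norm_num) |>.mp h7
          linarith [this]
        calc b = Real.sqrt b ^ 2 := (Real.sq_sqrt hbn).symm
          _ = (Real.sqrt lam1 / 2) ^ 2 := by rw [h8]
          _ = lam1 / 4 := by rw [div_pow, Real.sq_sqrt hlam1.le]; norm_num
      refine ⟨?_, hbeq⟩
      have hzero : x ⬝ᵥ (lam1 • B - A) *ᵥ x = 0 := by
        rw [sub_mulVec, dotProduct_sub, smul_mulVec, dotProduct_smul, smul_eq_mul]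
        rw [← ha, ← hbdef, hab]; ring
      have := (hPSD.dotProduct_mulVec_zero_iff x)
      rw [star_eq_self_real] at this
      have h9 := this.mp hzero
      rw [sub_mulVec, smul_mulVec, sub_eq_zero] at h9
      exact h9.symm
    · rintro ⟨hAx, hBx⟩
      intro y
      have haval : x ⬝ᵥ A *ᵥ x = lam1 ^ 2 / 4 := by
        rw [hAx, dotProduct_smul, smul_eq_mul, hBx]; ring
      have : x ⬝ᵥ B *ᵥ x - Real.sqrt (x ⬝ᵥ A *ᵥ x) = -(lam1 / 4) := by
        rw [hBx, haval, hsq]; ring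
      rw [this]
      exact hmin y
  · exact ⟨⟨c • z, hfx0⟩, by rintro r ⟨y, rfl⟩; exact hmin y⟩
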